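/- For μ₁ ∈ ℝ and μ ∈ ℝⁿ, σ_k^∞(μ₁, μ) = Σ_{j=0}^{k} (μ₁^j / j!) σ_{k-j}(μ), where σ_r denotes the classical r-th elementary symmetric polynomial; in particular σ_k^∞(0, μ) = σ_k(μ). -/

import Mathlib

/-- The `k`-th elementary symmetric polynomial of `μ : Fin n → ℝ`. -/
noncomputable def esymm {n : ℕ} (k : ℕ) (μ : Fin n → ℝ) : ℝ :=
  ∑ s ∈ Finset.powersetCard k (Finset.univ : Finset (Fin n)), ∏ i ∈ s, μ i

/-- The weighted elementary symmetric functions defined recursively: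
`σ₀^∞ = 1` and for `k ≥ 1`,
`k σ_k^∞(μ₀,μ) = σ_{k-1}^∞(μ₀,μ)(μ₀ + ∑ⱼ μⱼ) + ∑_{i=1}^{k-1} ∑_{j=1}^n (-1)^i σ_{k-1-i}^∞(μ₀,μ) μⱼ^{i+1}`. -/
noncomputable def esymmInfRec {n : ℕ} (μ0 : ℝ) (μ : Fin n → ℝ) : ℕ → ℝ
  | 0 => 1
  | (K + 1) =>
      (esymmInfRec μ0 μ K * (μ0 + ∑ j, μ j) +
        ∑ i ∈ Finset.range K, ∑ j, (-1 : ℝ) ^ (i + 1) * esymmInfRec μ0 μ (K - 1 - i) * μ j ^ (i + 2))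
        / (K + 1)
  termination_by k => k
  decreasing_by all_goals omega

open Finset


lemma esymm_eval {n : ℕ} (k : ℕ) (μ : Fin n → ℝ) :
    esymm k μ = MvPolynomial.eval μ (MvPolynomial.esymm (Fin n) ℝ k) := by
  simp [esymm, MvPolynomial.esymm]

lemma esymm_zero' {n : ℕ} (μ : Fin n → ℝ) : esymm 0 μ = 1 := by simp [esymm]

lemma esymm_one' {n : ℕ} (μ : Fin n → ℝ) : esymm 1 μ = ∑ j, μ j := by
  rw [esymm_eval, MvPolynomial.esymm_one]; simp

lemma newton {n : ℕ} (μ : Fin n → ℝ) (d : ℕ) :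
    ((d : ℝ) + 1) * esymm (d+1) μ
      = ∑ i ∈ range (d+1), (-1:ℝ)^i * esymm (d-i) μ * (∑ j, μ j ^ (i+1)) := by
  have h := congrArg (MvPolynomial.eval μ) (MvPolynomial.mul_esymm_eq_sum (Fin n) ℝ (d+1))
  simp only [map_mul, map_sum, map_pow, map_neg, map_one, map_natCast, MvPolynomial.psum,
    MvPolynomial.eval_X, ← esymm_eval] at h
  push_cast at h
  rw [h]
  have h2 : {a ∈ antidiagonal (d+1) | a.1 < d+1} = (range (d+1)).image fun i => (i, d+1-i) := by
    ext ⟨x, y⟩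
    simp only [mem_filter, HasAntidiagonal.mem_antidiagonal, mem_image, mem_range, Prod.mk.injEq]
    constructor
    · rintro ⟨h1, h2⟩; exact ⟨x, h2, rfl, by omega⟩
    · rintro ⟨i, hi, rfl, rfl⟩; omega
  rw [h2, Finset.sum_image (by intro a _ b _ hab; exact (Prod.mk.injEq _ _ _ _ ▸ hab).1)]
  rw [← Finset.sum_range_reflect, Finset.mul_sum]
  refine Finset.sum_congr rfl fun i hi => ?_
  simp only [mem_range] at hi
  have e1 : d + 1 - 1 - i = d - i := by omega
  have e2 : d + 1 - (d - i) = i + 1 := by omega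
  rw [e1, e2]
  have e3 : (-1:ℝ)^(d+1+1) * (-1:ℝ)^(d-i) = (-1:ℝ)^i := by
    rw [← pow_add, show d+1+1+(d-i) = 2*(d+1-i) + i by omega, pow_add, pow_mul]
    simp
  rw [← mul_assoc, ← mul_assoc, e3]

lemma newton' {n : ℕ} (μ : Fin n → ℝ) (d : ℕ) :
    ∑ i ∈ range d, (-1:ℝ)^(i+1) * esymm (d-1-i) μ * (∑ j, μ j ^ (i+2))
      = ((d:ℝ)+1) * esymm (d+1) μ - esymm d μ * (∑ j, μ j) := by
  have h := newton μ d
  rw [Finset.sum_range_succ'] at h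
  simp only [pow_zero, one_mul, Nat.sub_zero, zero_add, pow_one] at h
  have e : ∀ i ∈ range d, (-1:ℝ)^(i+1) * esymm (d-1-i) μ * (∑ j, μ j ^ (i+2))
      = (-1:ℝ)^(i+1) * esymm (d-(i+1)) μ * (∑ j, μ j ^ (i+1+1)) := by
    intro i _; rw [show d-1-i = d-(i+1) by omega]
  rw [Finset.sum_congr rfl e]
  linarith [h]

lemma key {n : ℕ} (μ0 : ℝ) (μ : Fin n → ℝ) : ∀ k,
    esymmInfRec μ0 μ k = ∑ j ∈ range (k+1), μ0^j / (Nat.factorial j) * esymm (k-j) μ := by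
  intro k
  induction k using Nat.strong_induction_on with
  | _ k IH =>
  match k with
  | 0 => simp [esymmInfRec, esymm_zero']
  | (K+1) =>
    rw [esymmInfRec, div_eq_iff (by positivity : ((K:ℝ)+1) ≠ 0), IH K (by omega)]
    -- rewrite inner recursive values
    have hinner : ∀ i ∈ range K,
        ∑ j, (-1:ℝ)^(i+1) * esymmInfRec μ0 μ (K-1-i) * μ j ^ (i+2)
          = ∑ j' ∈ range (K-i), μ0^j' / (Nat.factorial j') *
              ((-1:ℝ)^(i+1) * esymm (K-1-i-j') μ * (∑ j, μ j ^ (i+2))) := by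
      intro i hi
      simp only [mem_range] at hi
      rw [← Finset.mul_sum, IH (K-1-i) (by omega), show K-1-i+1 = K-i by omega,
        mul_assoc, Finset.sum_mul, Finset.mul_sum]
      exact Finset.sum_congr rfl fun j' _ => by ring
    rw [Finset.sum_congr rfl hinner]
    -- swap the double sum
    rw [Finset.sum_comm' (t' := range K) (s' := fun j => range (K-j))
      (by intro i j; simp only [mem_range]; omega)]
    -- apply Newton on inner sums
    have hnewt : ∀ j ∈ range K,
        ∑ i ∈ range (K-j), μ0^j / (Nat.factorial j) *
            ((-1:ℝ)^(i+1) * esymm (K-1-i-j) μ * (∑ l, μ l ^ (i+2)))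
          = μ0^j / (Nat.factorial j) *
            ((((K-j:ℕ):ℝ)+1) * esymm ((K-j)+1) μ - esymm (K-j) μ * (∑ l, μ l)) := by
      intro j hj
      rw [← Finset.mul_sum]
      congr 1
      rw [← newton' μ (K-j)]
      exact Finset.sum_congr rfl fun i _ => by rw [show K-1-i-j = (K-j)-1-i by omega]
    rw [Finset.sum_congr rfl hnewt]
    -- extend range K to range (K+1); the extra term vanishes
    have hext : ∑ j ∈ range K, μ0^j / (Nat.factorial j) *
            ((((K-j:ℕ):ℝ)+1) * esymm ((K-j)+1) μ - esymm (K-j) μ * (∑ l, μ l))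
        = ∑ j ∈ range (K+1), μ0^j / (Nat.factorial j) *
            ((((K-j:ℕ):ℝ)+1) * esymm ((K-j)+1) μ - esymm (K-j) μ * (∑ l, μ l)) := by
      rw [Finset.sum_range_succ, Nat.sub_self]
      simp [esymm_one', esymm_zero']
    rw [hext, Finset.sum_mul, ← Finset.sum_add_distrib]
    -- termwise rewrite of the combined sum
    have hterm : ∀ j ∈ range (K+1),
        μ0^j / (Nat.factorial j) * esymm (K-j) μ * (μ0 + ∑ l, μ l) +
          μ0^j / (Nat.factorial j) *
            ((((K-j:ℕ):ℝ)+1) * esymm ((K-j)+1) μ - esymm (K-j) μ * (∑ l, μ l))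
        = ((j:ℝ)+1) * (μ0^(j+1) / (Nat.factorial (j+1)) * esymm (K-j) μ) +
          (((K:ℝ)+1) - ((j:ℝ)+1) + 1) * (μ0^j / (Nat.factorial j) * esymm (K+1-j) μ) := by
      intro j hj
      simp only [mem_range] at hj
      have hc : ((K-j:ℕ):ℝ) = (K:ℝ) - (j:ℝ) := by
        rw [Nat.cast_sub (by omega)]
      have hf : ((Nat.factorial (j+1) : ℕ) : ℝ) = ((j:ℝ)+1) * (Nat.factorial j : ℝ) := by
        rw [Nat.factorial_succ]; push_cast; ring
      have hi : (K-j)+1 = K+1-j := by omega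
      rw [hi, hc, hf]
      have hfj : (Nat.factorial j : ℝ) ≠ 0 := Nat.cast_ne_zero.mpr (Nat.factorial_ne_zero j)
      field_simp
      ring
    rw [Finset.sum_congr rfl hterm, Finset.sum_add_distrib]
    -- reindex first sum, extend second sum
    have h1 : ∑ j ∈ range (K+1), ((j:ℝ)+1) * (μ0^(j+1) / (Nat.factorial (j+1)) * esymm (K-j) μ)
        = ∑ j ∈ range (K+2), (j:ℝ) * (μ0^j / (Nat.factorial j) * esymm (K+1-j) μ) := by
      symm
      rw [Finset.sum_range_succ']
      simp only [Nat.cast_zero, zero_mul, add_zero]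
      refine Finset.sum_congr rfl fun j _ => ?_
      simp only [Nat.succ_sub_succ]
      push_cast
      ring
    have h2 : ∑ j ∈ range (K+1), (((K:ℝ)+1) - ((j:ℝ)+1) + 1) * (μ0^j / (Nat.factorial j) * esymm (K+1-j) μ)
        = ∑ j ∈ range (K+2), (((K:ℝ)+1) - (j:ℝ)) * (μ0^j / (Nat.factorial j) * esymm (K+1-j) μ) := by
      symm
      rw [Finset.sum_range_succ]
      have hz : (((K:ℝ)+1) - ((K+1:ℕ):ℝ)) * (μ0^(K+1) / (Nat.factorial (K+1)) * esymm (K+1-(K+1)) μ) = 0 := by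
        push_cast; ring
      rw [hz, add_zero]
      exact Finset.sum_congr rfl fun j _ => by ring
    rw [h1, h2, ← Finset.sum_add_distrib, Finset.sum_mul]
    exact Finset.sum_congr rfl fun j _ => by ring

theorem esymmInfRec_eq_sum {n : ℕ} (k : ℕ) (μ1 : ℝ) (μ : Fin n → ℝ) :
    esymmInfRec μ1 μ k =
      ∑ j ∈ Finset.range (k + 1), μ1 ^ j / (Nat.factorial j) * esymm (k - j) μ ∧
    esymmInfRec (0 : ℝ) μ k = esymm k μ := by
  refine ⟨key μ1 μ k, ?_⟩
  rw [key (0:ℝ) μ k, Finset.sum_range_succ']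
  simp
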